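/- (Relation between LMPs and line congestion on a radial network.) Let G be a finite tree (a finite connected acyclic simple graph) on vertex set V. Let B : V × V → ℝ be symmetric with B(i,j) ≠ 0 whenever i and j are adjacent in G, and let d : V × V → ℝ be antisymmetric (d(i,j) = −d(j,i)). Suppose λ : V → ℝ satisfies, for every vertex i, ∑_{j adjacent to i} B(i,j)·(λ(i) − λ(j)) = ∑_{j adjacent to i} B(i,j)·d(i,j). Then for every pair of adjacent vertices i, j one has λ(i) − λ(j) = d(i,j). In particular, if v₁, v₂ ∈ V and d(i,j) = 0 for every edge {i,j} on the (unique) path in G from v₁ to v₂, then λ(v₁) = λ(v₂): any two buses of a radial power network connected by an uncongested path have the same locational marginal price. -/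

import Mathlib

/-- On a finite tree, if the locational marginal prices `lam` satisfy the nodal
stationarity conditions `∑_{j ~ i} B i j (lam i − lam j) = ∑_{j ~ i} B i j (d i j)`
with symmetric nonzero line susceptances `B` and antisymmetric congestion duals `d`,
then `lam i − lam j = d i j` across every edge; in particular any two vertices joined
by a path on which `d` vanishes have equal prices. -/
theorem lmp_equal_along_uncongested_path
    {V : Type*} [Fintype V] [DecidableEq V]
    (G : SimpleGraph V) [DecidableRel G.Adj]
    (hconn : G.Connected) (hacyc : G.IsAcyclic)
    (B : V → V → ℝ) (hBsymm : ∀ i j, B i j = B j i)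
    (hBne : ∀ i j, G.Adj i j → B i j ≠ 0)
    (d : V → V → ℝ) (hd : ∀ i j, d i j = -d j i)
    (lam : V → ℝ)
    (hstat : ∀ i, ∑ j ∈ G.neighborFinset i, B i j * (lam i - lam j) =
      ∑ j ∈ G.neighborFinset i, B i j * d i j) :
    (∀ i j, G.Adj i j → lam i - lam j = d i j) ∧
    (∀ (v₁ v₂ : V) (p : G.Walk v₁ v₂), p.IsPath →
      (∀ i j, G.Adj i j → s(i, j) ∈ p.edges → d i j = 0) → lam v₁ = lam v₂) := by
  classical
  set f : V → V → ℝ := fun u v => B u v * (lam u - lam v - d u v) with hf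
  have hfanti : ∀ u v, f v u = - f u v := by
    intro u v
    simp only [hf]
    rw [hBsymm v u, hd v u]
    ring
  have hdiv : ∀ u, ∑ v ∈ G.neighborFinset u, f u v = 0 := by
    intro u
    have h := hstat u
    have hrw : ∀ v, f u v = B u v * (lam u - lam v) - B u v * d u v := fun v => by
      simp only [hf]; ring
    simp_rw [hrw, Finset.sum_sub_distrib, h, sub_self]
  have key : ∀ i j, G.Adj i j → lam i - lam j = d i j := by
    intro i j hij
    set G' := G \ SimpleGraph.fromEdgeSet {s(i, j)} with hG'
    have hbridge : ¬ G'.Reachable i j :=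
      ((SimpleGraph.isAcyclic_iff_forall_adj_isBridge.mp hacyc) hij)
    set S : Finset V := Finset.univ.filter (fun u => G'.Reachable i u) with hS
    have hiS : i ∈ S :=
      Finset.mem_filter.mpr ⟨Finset.mem_univ i, SimpleGraph.Reachable.refl i⟩
    have hjS : j ∉ S := by simpa [hS] using hbridge
    have hG'adj : ∀ u v, G.Adj u v → s(u, v) ≠ s(i, j) → G'.Adj u v := by
      intro u v huv hne
      simp only [hG', SimpleGraph.sdiff_adj, SimpleGraph.fromEdgeSet_adj,
        Set.mem_singleton_iff]
      exact ⟨huv, fun h => hne h.1⟩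
    have hstep : ∀ u, u ∈ S → ∀ v, G.Adj u v → v ∉ S → u = i ∧ v = j := by
      intro u huS v huv hvS
      by_cases hne : s(u, v) = s(i, j)
      · rcases Sym2.eq_iff.mp hne with ⟨rfl, rfl⟩ | ⟨rfl, rfl⟩
        · exact ⟨rfl, rfl⟩
        · exact absurd huS hjS
      · exfalso
        apply hvS
        simp only [hS, Finset.mem_filter, Finset.mem_univ, true_and] at huS ⊢
        exact huS.trans ⟨SimpleGraph.Walk.cons (hG'adj u v huv hne) SimpleGraph.Walk.nil⟩
    -- split the double sum
    have hsplit : ∀ u, ∑ v ∈ G.neighborFinset u, f u v =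
        (∑ v ∈ (G.neighborFinset u).filter (· ∈ S), f u v) +
        ∑ v ∈ (G.neighborFinset u).filter (· ∉ S), f u v := by
      intro u
      exact (Finset.sum_filter_add_sum_filter_not _ _ _).symm
    have hzero : ∑ u ∈ S, ∑ v ∈ G.neighborFinset u, f u v = 0 :=
      Finset.sum_eq_zero fun u _ => hdiv u
    -- inner part cancels
    have hinner : ∑ u ∈ S, ∑ v ∈ (G.neighborFinset u).filter (· ∈ S), f u v = 0 := by
      set T : Finset (V × V) := (S ×ˢ S).filter (fun p => G.Adj p.1 p.2) with hT
      have heq : ∑ p ∈ T, f p.1 p.2 =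
          ∑ u ∈ S, ∑ v ∈ (G.neighborFinset u).filter (· ∈ S), f u v := by
        rw [hT]
        rw [show Finset.filter (fun p => G.Adj p.1 p.2) (S ×ˢ S) = Finset.filter (fun (p : V × V) => G.Adj p.1 p.2) (S ×ˢ S) from rfl]
        refine (Finset.sum_filter _ _).trans ?_
        rw [Finset.sum_product]
        refine Finset.sum_congr rfl fun u _ => ?_
        have hfilter : (G.neighborFinset u).filter (· ∈ S) = S.filter (G.Adj u) := by
          ext v; simp [SimpleGraph.mem_neighborFinset, and_comm]
        rw [hfilter]
        exact (Finset.sum_filter _ _).symm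
      have hswap : ∑ p ∈ T, f p.1 p.2 = ∑ p ∈ T, f p.2 p.1 := by
        apply Finset.sum_nbij' (fun p => (p.2, p.1)) (fun p => (p.2, p.1)) <;>
          simp +contextual [hT, SimpleGraph.adj_comm, Finset.mem_product, and_comm]
      have : ∑ p ∈ T, f p.1 p.2 = - ∑ p ∈ T, f p.1 p.2 := by
        conv_lhs => rw [hswap]
        rw [← Finset.sum_neg_distrib]
        exact Finset.sum_congr rfl fun p _ => hfanti p.1 p.2
      rw [← heq]; linarith
    have houter : ∑ u ∈ S, ∑ v ∈ (G.neighborFinset u).filter (· ∉ S), f u v = f i j := by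
      rw [Finset.sum_eq_single i]
      · have : (G.neighborFinset i).filter (· ∉ S) = {j} := by
          ext v
          simp only [Finset.mem_filter, SimpleGraph.mem_neighborFinset, Finset.mem_singleton]
          constructor
          · rintro ⟨hv, hvS⟩
            exact (hstep i hiS v hv hvS).2
          · rintro rfl
            exact ⟨hij, hjS⟩
        rw [this, Finset.sum_singleton]
      · intro u huS hui
        apply Finset.sum_eq_zero
        intro v hv
        simp only [Finset.mem_filter, SimpleGraph.mem_neighborFinset] at hv
        exact absurd (hstep u huS v hv.1 hv.2).1 hui
      · intro h; exact absurd hiS h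
    have hfij : f i j = 0 := by
      have := hzero
      simp_rw [hsplit] at this
      rw [Finset.sum_add_distrib, hinner, houter, zero_add] at this
      exact this
    have := mul_eq_zero.mp hfij
    rcases this with h | h
    · exact absurd h (hBne i j hij)
    · linarith
  refine ⟨key, ?_⟩
  intro v₁ v₂ p
  induction p with
  | nil => intro _ _; rfl
  | @cons a b c h q ih =>
    intro hp hdz
    have h1 : lam a - lam b = d a b := key a b h
    have h2 : d a b = 0 := hdz a b h (by simp)
    have h3 := ih hp.of_cons (fun x y hxy hmem => hdz x y hxy (by simp [hmem]))
    linarith
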